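/- Let h₁, f₂ be vectors in ℝ^{r₁} and h₂ a vector in ℝ^{r₂} with ‖f₂‖ ≤ ‖h₂‖, and let P₁, P₂ ≥ 0. Define for nonnegative reals S₁, S₂ the function R_s(S₁, S₂) = ½·log det( I + S₁·h₁h₁ᵀ·(I + S₂·f₂f₂ᵀ)⁻¹ ) + ½·log det( I + S₂·h₂h₂ᵀ ). Then for all S₁ ∈ [0, P₁] and S₂ ∈ [0, P₂], R_s(S₁, S₂) ≤ R_s(P₁, P₂); that is, R_s is maximized over [0,P₁]×[0,P₂] at full power (P₁, P₂). -/

import Mathlib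

open Matrix

private lemma dot_self_nonneg {n : ℕ} (v : Fin n → ℝ) : 0 ≤ v ⬝ᵥ v :=
  Finset.sum_nonneg fun i _ => mul_self_nonneg (v i)

private lemma vmv_mul {n : ℕ} (u v w x : Fin n → ℝ) :
    vecMulVec u v * vecMulVec w x = (v ⬝ᵥ w) • vecMulVec u x := by
  ext i j
  simp only [mul_apply, vecMulVec_apply, Matrix.smul_apply, smul_eq_mul, dotProduct]
  rw [Finset.sum_mul]
  exact Finset.sum_congr rfl fun k _ => by ring

private lemma det_one_add_vmv {n : ℕ} (u v : Fin n → ℝ) :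
    (1 + vecMulVec u v).det = 1 + v ⬝ᵥ u := by
  rw [vecMulVec_eq Unit, det_one_add_replicateCol_mul_replicateRow]

private lemma inv_one_add_vmv {n : ℕ} (f : Fin n → ℝ) (t : ℝ) (ht : 0 ≤ t) :
    (1 + t • vecMulVec f f)⁻¹ = 1 - (t / (1 + t * (f ⬝ᵥ f))) • vecMulVec f f := by
  have hF : 0 ≤ f ⬝ᵥ f := dot_self_nonneg f
  have hden : (0:ℝ) < 1 + t * (f ⬝ᵥ f) := by positivity
  apply inv_eq_right_inv
  set F := f ⬝ᵥ f
  set b := t / (1 + t * F) with hb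
  have hMM : vecMulVec f f * vecMulVec f f = F • vecMulVec f f := vmv_mul f f f f
  have key : t - b - t * b * F = 0 := by
    rw [hb]; field_simp; ring
  calc (1 + t • vecMulVec f f) * (1 - b • vecMulVec f f)
      = 1 - b • vecMulVec f f + t • vecMulVec f f
        - (t * b) • (vecMulVec f f * vecMulVec f f) := by
        rw [add_mul, one_mul, mul_sub, mul_one, smul_mul_assoc, mul_smul_comm, smul_smul]
        abel
    _ = 1 + (t - b - t * b * F) • vecMulVec f f := by
        rw [hMM, smul_smul, sub_smul, sub_smul]
        abel
    _ = 1 := by rw [key, zero_smul, add_zero]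

private lemma det_main {n : ℕ} (h f : Fin n → ℝ) (s t : ℝ) (ht : 0 ≤ t) :
    (1 + s • vecMulVec h h * (1 + t • vecMulVec f f)⁻¹).det
      = 1 + s * (h ⬝ᵥ h) - s * t * (h ⬝ᵥ f) ^ 2 / (1 + t * (f ⬝ᵥ f)) := by
  have hF : 0 ≤ f ⬝ᵥ f := dot_self_nonneg f
  have hden : (0:ℝ) < 1 + t * (f ⬝ᵥ f) := by positivity
  rw [inv_one_add_vmv f t ht]
  set F := f ⬝ᵥ f
  set b := t / (1 + t * F) with hb
  have key : s • vecMulVec h h * (1 - b • vecMulVec f f)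
      = vecMulVec h (s • h - (s * b * (h ⬝ᵥ f)) • f) := by
    rw [mul_sub, mul_one, smul_mul_assoc, mul_smul_comm, vmv_mul]
    ext i j
    simp only [Matrix.sub_apply, Matrix.smul_apply, vecMulVec_apply, smul_eq_mul, Pi.sub_apply, Pi.smul_apply]
    ring
  rw [key, det_one_add_vmv, sub_dotProduct, smul_dotProduct, smul_dotProduct,
    dotProduct_comm f h]
  have : (1:ℝ) + t * F ≠ 0 := ne_of_gt hden
  rw [hb]
  field_simp
  ring_nf
  field_simp
  ring

private lemma poly2 (c e g d F t : ℝ) (hc : 0 ≤ c) (he : 0 ≤ e) (hg : 0 ≤ g)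
    (hd : 0 ≤ d) (hF : 0 ≤ F) (ht : 0 ≤ t) :
    ((1+c)*(1+t*F) - t*(c*F - e)) * (1+t*(F+g)) * (1+(t+d)*F)
      ≤ ((1+c)*(1+(t+d)*F) - (t+d)*(c*F - e)) * (1+(t+d)*(F+g)) * (1+t*F) := by
  nlinarith [mul_nonneg (hd) hF,
    mul_nonneg (mul_nonneg (mul_nonneg (hd) hF) hF) ht,
    mul_nonneg (mul_nonneg (mul_nonneg (mul_nonneg (mul_nonneg (hd) hF) hF) hF) ht) ht,
    mul_nonneg (mul_nonneg (mul_nonneg (hd) hd) hF) hF,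
    mul_nonneg (mul_nonneg (mul_nonneg (mul_nonneg (mul_nonneg (hd) hd) hF) hF) hF) ht,
    mul_nonneg (hg) hd,
    mul_nonneg (mul_nonneg (mul_nonneg (hg) hd) hF) ht,
    mul_nonneg (mul_nonneg (mul_nonneg (mul_nonneg (mul_nonneg (hg) hd) hF) hF) ht) ht,
    mul_nonneg (mul_nonneg (mul_nonneg (hg) hd) hd) hF,
    mul_nonneg (mul_nonneg (mul_nonneg (mul_nonneg (mul_nonneg (hg) hd) hd) hF) hF) ht,
    mul_nonneg (he) hd,
    mul_nonneg (mul_nonneg (mul_nonneg (he) hd) hF) ht,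
    mul_nonneg (mul_nonneg (mul_nonneg (mul_nonneg (mul_nonneg (he) hd) hF) hF) ht) ht,
    mul_nonneg (mul_nonneg (mul_nonneg (he) hd) hd) hF,
    mul_nonneg (mul_nonneg (mul_nonneg (mul_nonneg (mul_nonneg (he) hd) hd) hF) hF) ht,
    mul_nonneg (mul_nonneg (mul_nonneg (he) hg) hd) ht,
    mul_nonneg (mul_nonneg (mul_nonneg (mul_nonneg (mul_nonneg (he) hg) hd) hF) ht) ht,
    mul_nonneg (mul_nonneg (mul_nonneg (he) hg) hd) hd,
    mul_nonneg (mul_nonneg (mul_nonneg (mul_nonneg (mul_nonneg (he) hg) hd) hd) hF) ht,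
    mul_nonneg (mul_nonneg (hc) hg) hd]

private lemma key_ineq (A B F H s p t q : ℝ) (hA : 0 ≤ A) (hB : 0 ≤ B)
    (hBAF : B ≤ A * F) (hF : 0 ≤ F) (hFH : F ≤ H) (hs : 0 ≤ s) (hsp : s ≤ p)
    (ht : 0 ≤ t) (htq : t ≤ q) :
    (1 + s * A - s * t * B / (1 + t * F)) * (1 + t * H)
      ≤ (1 + p * A - p * q * B / (1 + q * F)) * (1 + q * H) := by
  have hp : 0 ≤ p := hs.trans hsp
  have hq : 0 ≤ q := ht.trans htq
  have hu : (0:ℝ) < 1 + t * F := by positivity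
  have hv : (0:ℝ) < 1 + q * F := by positivity
  have hH : 0 ≤ H := hF.trans hFH
  have htH : (0:ℝ) < 1 + t * H := by positivity
  have hqH : (0:ℝ) < 1 + q * H := by positivity
  -- step 1: increase s to p
  have step1 : (1 + s * A - s * t * B / (1 + t * F)) * (1 + t * H)
      ≤ (1 + p * A - p * t * B / (1 + t * F)) * (1 + t * H) := by
    apply mul_le_mul_of_nonneg_right _ (le_of_lt htH)
    have hcoef : t * B / (1 + t * F) ≤ A := by
      rw [div_le_iff₀ hu]; nlinarith [mul_nonneg ht (sub_nonneg.mpr hBAF)]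
    have hs' : s * t * B / (1 + t * F) = s * (t * B / (1 + t * F)) := by ring
    have hp' : p * t * B / (1 + t * F) = p * (t * B / (1 + t * F)) := by ring
    rw [hs', hp']
    nlinarith [mul_nonneg (sub_nonneg.mpr hsp) (sub_nonneg.mpr hcoef)]
  -- step 2: increase t to q with s = p
  have step2 : (1 + p * A - p * t * B / (1 + t * F)) * (1 + t * H)
      ≤ (1 + p * A - p * q * B / (1 + q * F)) * (1 + q * H) := by
    have hL : (1 + p * A - p * t * B / (1 + t * F)) * (1 + t * H)
        = ((1 + p * A) * (1 + t * F) - t * (p * B)) * (1 + t * H) / (1 + t * F) := by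
      rw [eq_div_iff hu.ne']; field_simp
    have hR : (1 + p * A - p * q * B / (1 + q * F)) * (1 + q * H)
        = ((1 + p * A) * (1 + q * F) - q * (p * B)) * (1 + q * H) / (1 + q * F) := by
      rw [eq_div_iff hv.ne']; field_simp
    rw [hL, hR, div_le_div_iff₀ hu hv]
    have := poly2 (p * A) (p * (A * F - B)) (H - F) (q - t) F t
      (mul_nonneg hp hA) (mul_nonneg hp (sub_nonneg.mpr hBAF)) (sub_nonneg.mpr hFH)
      (sub_nonneg.mpr htq) hF ht
    calc ((1 + p * A) * (1 + t * F) - t * (p * B)) * (1 + t * H) * (1 + q * F)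
        = ((1+p*A)*(1+t*F) - t*(p*A*F - p*(A*F-B))) * (1+t*(F+(H-F))) * (1+(t+(q-t))*F) := by
          ring
      _ ≤ ((1+p*A)*(1+(t+(q-t))*F) - (t+(q-t))*(p*A*F - p*(A*F-B))) * (1+(t+(q-t))*(F+(H-F)))
            * (1+t*F) := this
      _ = ((1 + p * A) * (1 + q * F) - q * (p * B)) * (1 + q * H) * (1 + t * F) := by ring
  exact step1.trans step2

private lemma det1_pos (A B F s t : ℝ) (hA : 0 ≤ A) (hB : 0 ≤ B) (hBAF : B ≤ A * F)
    (hF : 0 ≤ F) (hs : 0 ≤ s) (ht : 0 ≤ t) :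
    0 < 1 + s * A - s * t * B / (1 + t * F) := by
  have hu : (0:ℝ) < 1 + t * F := by positivity
  have : 1 + s * A - s * t * B / (1 + t * F)
      = ((1 + s * A) * (1 + t * F) - s * t * B) / (1 + t * F) := by field_simp
  rw [this]
  apply div_pos _ hu
  nlinarith [mul_nonneg (mul_nonneg hs ht) (sub_nonneg.mpr hBAF), mul_nonneg hs hA,
    mul_nonneg ht hF, mul_nonneg (mul_nonneg hs hA) (mul_nonneg ht hF)]

/-- SIMO Z interference channel (Proposition 4 core): if `‖f₂‖ ≤ ‖h₂‖`, the
treating-interference-as-noise sum rate is maximized at full power `(P₁, P₂)`. -/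
theorem stmt13 {r₁ r₂ : ℕ} (h₁ f₂ : Fin r₁ → ℝ) (h₂ : Fin r₂ → ℝ)
    (hnorm : Real.sqrt (f₂ ⬝ᵥ f₂) ≤ Real.sqrt (h₂ ⬝ᵥ h₂))
    (P₁ P₂ : ℝ) (hP₁ : 0 ≤ P₁) (hP₂ : 0 ≤ P₂)
    (S₁ S₂ : ℝ) (hS₁ : S₁ ∈ Set.Icc 0 P₁) (hS₂ : S₂ ∈ Set.Icc 0 P₂) :
    (1/2) * Real.log ((1 + S₁ • vecMulVec h₁ h₁ * (1 + S₂ • vecMulVec f₂ f₂)⁻¹).det) +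
        (1/2) * Real.log ((1 + S₂ • vecMulVec h₂ h₂).det) ≤
      (1/2) * Real.log ((1 + P₁ • vecMulVec h₁ h₁ * (1 + P₂ • vecMulVec f₂ f₂)⁻¹).det) +
        (1/2) * Real.log ((1 + P₂ • vecMulVec h₂ h₂).det) := by
  obtain ⟨hS₁0, hS₁P⟩ := hS₁
  obtain ⟨hS₂0, hS₂P⟩ := hS₂
  set A := h₁ ⬝ᵥ h₁ with hAdef
  set B := (h₁ ⬝ᵥ f₂) ^ 2 with hBdef
  set F := f₂ ⬝ᵥ f₂ with hFdef
  set H := h₂ ⬝ᵥ h₂ with hHdef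
  have hA : 0 ≤ A := dot_self_nonneg h₁
  have hF : 0 ≤ F := dot_self_nonneg f₂
  have hH : 0 ≤ H := dot_self_nonneg h₂
  have hB : 0 ≤ B := sq_nonneg _
  have hBAF : B ≤ A * F := by
    have := Finset.sum_mul_sq_le_sq_mul_sq Finset.univ h₁ f₂
    simpa [hAdef, hBdef, hFdef, dotProduct, sq] using this
  have hFH : F ≤ H := by
    have h1 : Real.sqrt F ^ 2 ≤ Real.sqrt H ^ 2 :=
      pow_le_pow_left₀ (Real.sqrt_nonneg _) hnorm 2
    rwa [Real.sq_sqrt hF, Real.sq_sqrt hH] at h1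
  -- rewrite determinants
  have e1 : (1 + S₁ • vecMulVec h₁ h₁ * (1 + S₂ • vecMulVec f₂ f₂)⁻¹).det
      = 1 + S₁ * A - S₁ * S₂ * B / (1 + S₂ * F) := det_main h₁ f₂ S₁ S₂ hS₂0
  have e2 : (1 + P₁ • vecMulVec h₁ h₁ * (1 + P₂ • vecMulVec f₂ f₂)⁻¹).det
      = 1 + P₁ * A - P₁ * P₂ * B / (1 + P₂ * F) := det_main h₁ f₂ P₁ P₂ hP₂
  have e3 : (1 + S₂ • vecMulVec h₂ h₂).det = 1 + S₂ * H := by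
    have : S₂ • vecMulVec h₂ h₂ = vecMulVec h₂ (S₂ • h₂) := by
      ext i j; simp [vecMulVec_apply]; ring
    rw [this, det_one_add_vmv, smul_dotProduct, smul_eq_mul, hHdef]
  have e4 : (1 + P₂ • vecMulVec h₂ h₂).det = 1 + P₂ * H := by
    have : P₂ • vecMulVec h₂ h₂ = vecMulVec h₂ (P₂ • h₂) := by
      ext i j; simp [vecMulVec_apply]; ring
    rw [this, det_one_add_vmv, smul_dotProduct, smul_eq_mul, hHdef]
  rw [e1, e2, e3, e4]
  have hX1 : 0 < 1 + S₁ * A - S₁ * S₂ * B / (1 + S₂ * F) :=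
    det1_pos A B F S₁ S₂ hA hB hBAF hF hS₁0 hS₂0
  have hY1 : 0 < 1 + P₁ * A - P₁ * P₂ * B / (1 + P₂ * F) :=
    det1_pos A B F P₁ P₂ hA hB hBAF hF hP₁ hP₂
  have hX2 : (0:ℝ) < 1 + S₂ * H := by positivity
  have hY2 : (0:ℝ) < 1 + P₂ * H := by positivity
  have hmain : (1 + S₁ * A - S₁ * S₂ * B / (1 + S₂ * F)) * (1 + S₂ * H)
      ≤ (1 + P₁ * A - P₁ * P₂ * B / (1 + P₂ * F)) * (1 + P₂ * H) :=
    key_ineq A B F H S₁ P₁ S₂ P₂ hA hB hBAF hF hFH hS₁0 hS₁P hS₂0 hS₂P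
  rw [← mul_add, ← mul_add]
  apply mul_le_mul_of_nonneg_left _ (by norm_num : (0:ℝ) ≤ 1/2)
  rw [← Real.log_mul (ne_of_gt hX1) (ne_of_gt hX2), ← Real.log_mul (ne_of_gt hY1) (ne_of_gt hY2)]
  exact Real.log_le_log (mul_pos hX1 hX2) hmain
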